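/- For a finite population of real numbers z_1,...,z_n with mean z̄ and variance σ² = (1/n)∑(z_i - z̄)², if A is a uniformly random subset of {1,...,n} of fixed size n_A selected without replacement, with p_A = n_A/n and ς = min{1/70, (3p_A)²/70, (3-3p_A)²/70}, then for any t > 0, P(z̄_A - z̄ ≥ t) ≤ exp(-p_A·n_A·t² / ((1+ς)²·σ²)), where z̄_A is the sample mean over A. -/

import Mathlib

open Finset


lemma hoeffding_two_point (q : ℝ) (hq0 : 0 ≤ q) (hq1 : q ≤ 1) (x : ℝ) :
    Real.exp (-(q*x)) * (1 - q + q * Real.exp x) ≤ Real.exp (x^2/8) := by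
  -- f x = 1 - q + q * exp x, positive
  set f : ℝ → ℝ := fun u => 1 - q + q * Real.exp u with hf_def
  have hfpos : ∀ u, 0 < f u := by
    intro u
    rcases eq_or_lt_of_le hq1 with h | h
    · simp [hf_def, ← h]; positivity
    · have : 0 < 1 - q := by linarith
      have : 0 ≤ q * Real.exp u := by positivity
      simp only [hf_def]; linarith
  have hf : ∀ u, HasDerivAt f (q * Real.exp u) u := by
    intro u
    exact ((Real.hasDerivAt_exp u).const_mul q).const_add (1 - q)
  -- φ = derivative of h, where h u = u^2/8 + q*u - log (f u)
  set φ : ℝ → ℝ := fun u => u/4 + q - q * Real.exp u / f u with hφ_def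
  set h : ℝ → ℝ := fun u => u^2/8 + q*u - Real.log (f u) with hh_def
  have hh : ∀ u, HasDerivAt h (φ u) u := by
    intro u
    have h1 : HasDerivAt (fun u : ℝ => u^2/8 + q*u) (u/4 + q) u := by
      have := ((hasDerivAt_pow 2 u).div_const 8).add ((hasDerivAt_id u).const_mul q)
      exact this.congr_deriv (by norm_num; ring)
    have h2 : HasDerivAt (fun u => Real.log (f u)) (q * Real.exp u / f u) u :=
      (hf u).log (hfpos u).ne'
    exact h1.sub h2
  have hφ : ∀ u, HasDerivAt φ
      (1/4 - (q * Real.exp u * f u - q * Real.exp u * (q * Real.exp u)) / (f u)^2) u := by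
    intro u
    have h1 : HasDerivAt (fun u : ℝ => u/4 + q) (1/4) u := by
      simpa using ((hasDerivAt_id u).div_const 4).add_const q
    have h2 : HasDerivAt (fun u => q * Real.exp u / f u)
        ((q * Real.exp u * f u - q * Real.exp u * (q * Real.exp u)) / (f u)^2) u :=
      (((Real.hasDerivAt_exp u).const_mul q).div (hf u) (hfpos u).ne')
    exact h1.sub h2
  have hφmono : Monotone φ := by
    apply monotone_of_hasDerivAt_nonneg hφ
    intro u
    have hp := hfpos u
    have he : 0 < Real.exp u := Real.exp_pos u
    have key : q * Real.exp u * f u - q * Real.exp u * (q * Real.exp u) ≤ (f u)^2 / 4 := by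
      have hexp : f u = 1 - q + q * Real.exp u := rfl
      nlinarith [sq_nonneg (1 - q - q * Real.exp u), mul_nonneg hq0 he.le,
        sub_nonneg.2 hq1]
    have hsq : (0:ℝ) < (f u)^2 := by positivity
    simp only [Pi.zero_apply]
    have : (q * Real.exp u * f u - q * Real.exp u * (q * Real.exp u)) / (f u)^2 ≤ 1/4 := by
      rw [div_le_iff₀ hsq]; nlinarith
    linarith
  have hφ0 : φ 0 = 0 := by
    simp [hφ_def, hf_def]
  have hh0 : h 0 = 0 := by
    simp [hh_def, hf_def]
  have hnonneg : ∀ u, 0 ≤ h u := by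
    intro u
    rcases le_total 0 u with hu | hu
    · have mono : MonotoneOn h (Set.Ici 0) := by
        apply monotoneOn_of_hasDerivWithinAt_nonneg (convex_Ici 0)
          (fun v _ => (hh v).continuousAt.continuousWithinAt)
          (fun v _ => (hh v).hasDerivWithinAt)
        intro v hv
        rw [interior_Ici] at hv
        have : φ 0 ≤ φ v := hφmono (le_of_lt hv)
        linarith [hφ0 ▸ this]
      have := mono (Set.self_mem_Ici) (Set.mem_Ici.2 hu) hu
      linarith [hh0 ▸ this]
    · have anti : AntitoneOn h (Set.Iic 0) := by
        apply antitoneOn_of_hasDerivWithinAt_nonpos (convex_Iic 0)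
          (fun v _ => (hh v).continuousAt.continuousWithinAt)
          (fun v _ => (hh v).hasDerivWithinAt)
        intro v hv
        rw [interior_Iic] at hv
        have : φ v ≤ φ 0 := hφmono (le_of_lt hv)
        linarith [hφ0 ▸ this]
      have := anti (Set.mem_Iic.2 hu) (Set.self_mem_Iic) hu
      linarith [hh0 ▸ this]
  -- conclude
  have hx := hnonneg x
  have hlog : Real.log (f x) ≤ x^2/8 + q*x := by
    simp only [hh_def] at hx; linarith
  have : f x ≤ Real.exp (x^2/8 + q*x) := by
    rw [← Real.exp_log (hfpos x)]
    exact Real.exp_le_exp.2 hlog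
  calc Real.exp (-(q*x)) * (1 - q + q * Real.exp x)
      = Real.exp (-(q*x)) * f x := rfl
    _ ≤ Real.exp (-(q*x)) * Real.exp (x^2/8 + q*x) := by
        exact mul_le_mul_of_nonneg_left this (Real.exp_pos _).le
    _ = Real.exp (x^2/8) := by rw [← Real.exp_add]; ring_nf


lemma mgf_powersetCard {ι : Type*} [DecidableEq ι] (s : Finset ι) :
    ∀ (m : ℕ), m ≤ s.card → ∀ (y : ι → ℝ) (l : ℝ),
    ∑ A ∈ s.powersetCard m, Real.exp (l * ∑ i ∈ A, y i) ≤
      (s.card.choose m : ℝ) *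
        Real.exp (l * m * ((∑ i ∈ s, y i) / s.card)
          + l^2 * (∑ i ∈ s, (y i - (∑ j ∈ s, y j) / s.card)^2) / 4) := by
  induction s using Finset.induction_on with
  | empty =>
      intro m hm y l
      simp only [Nat.le_zero, Finset.card_empty] at hm
      subst hm
      simp
  | @insert a s' ha IH =>
      intro m hm y l
      rcases Nat.eq_zero_or_pos m with rfl | hmpos
      · -- m = 0
        rw [Finset.powersetCard_zero]
        simp only [Finset.sum_singleton, Finset.sum_empty, mul_zero, Real.exp_zero,
          Nat.choose_zero_right, Nat.cast_one, Nat.cast_zero, zero_mul, one_mul, zero_add]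
        exact Real.one_le_exp (by positivity)
      obtain ⟨k, rfl⟩ : ∃ k, m = k + 1 := ⟨m - 1, by omega⟩
      rcases eq_or_lt_of_le hm with hme | hmlt
      · -- m = card (insert a s') : only one subset, namely insert a s' itself
        rw [hme, Finset.powersetCard_self]
        have hcard : (0:ℝ) < ((insert a s').card : ℝ) := by
          have := Finset.card_insert_of_notMem ha
          positivity
        rw [Finset.sum_singleton]
        have hμ : (((insert a s').card : ℝ)) * ((∑ i ∈ insert a s', y i) / ((insert a s').card : ℝ))
            = ∑ i ∈ insert a s', y i := by
          field_simp
        rw [Nat.choose_self, Nat.cast_one, one_mul]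
        apply Real.exp_le_exp.2
        rw [mul_assoc, hμ]
        have : (0:ℝ) ≤ l^2 * (∑ i ∈ insert a s', (y i - (∑ j ∈ insert a s', y j) / ((insert a s').card : ℝ))^2) / 4 := by
          positivity
        linarith
      · -- main case : k + 1 ≤ s'.card
        have hks : k + 1 ≤ s'.card := by
          rw [Finset.card_insert_of_notMem ha] at hmlt; omega
        have hc1 : 1 ≤ s'.card := le_trans (by omega) hks
        rw [Finset.card_insert_of_notMem ha, Finset.sum_insert ha]
        have hcR : (1:ℝ) ≤ (s'.card:ℝ) := by exact_mod_cast hc1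
        have hcpos : (0:ℝ) < (s'.card:ℝ) := by linarith
        have hNpos : (0:ℝ) < (s'.card:ℝ) + 1 := by linarith
        set c := s'.card with hc
        set μ' : ℝ := ∑ i ∈ s', y i with hμ'
        set yb : ℝ := μ' / c with hyb
        set V' : ℝ := ∑ i ∈ s', (y i - yb)^2 with hV'
        set b : ℝ := y a - yb with hb
        set x : ℝ := l * b with hx
        set q : ℝ := ((k:ℝ)+1) / ((c:ℝ)+1) with hq
        set ν : ℝ := (y a + μ') / ((c:ℝ)+1) with hν
        set w : ℝ := b/((c:ℝ)+1) with hw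
        have hbw : b = ((c:ℝ)+1)*w := by
          rw [hw]; field_simp
        -- split the sum over subsets of insert a s'
        rw [Finset.powersetCard_succ_insert ha]
        rw [Finset.sum_union ?hdisj]
        case hdisj =>
          rw [Finset.disjoint_left]
          intro A hA hA2
          obtain ⟨hsub, _⟩ := Finset.mem_powersetCard.1 hA
          obtain ⟨B, hB, rfl⟩ := Finset.mem_image.1 hA2
          exact ha (hsub (Finset.mem_insert_self a B))
        rw [Finset.sum_image ?hinj]
        case hinj =>
          intro A hA B hB hAB
          obtain ⟨hsubA, _⟩ := Finset.mem_powersetCard.1 hA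
          obtain ⟨hsubB, _⟩ := Finset.mem_powersetCard.1 hB
          have haA : a ∉ A := fun h => ha (hsubA h)
          have haB : a ∉ B := fun h => ha (hsubB h)
          rw [← Finset.erase_insert haA, ← Finset.erase_insert haB, hAB]
        have hrw : ∀ A ∈ s'.powersetCard k, Real.exp (l * ∑ i ∈ insert a A, y i)
            = Real.exp (l * y a) * Real.exp (l * ∑ i ∈ A, y i) := by
          intro A hA
          obtain ⟨hsub, _⟩ := Finset.mem_powersetCard.1 hA
          have haA : a ∉ A := fun h => ha (hsub h)
          rw [Finset.sum_insert haA, ← Real.exp_add]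
          congr 1
          ring
        rw [Finset.sum_congr rfl hrw, ← Finset.mul_sum]
        -- cast identities for binomial coefficients
        set C1 : ℝ := ((c.choose (k+1)) : ℝ) with hC1
        set C2 : ℝ := ((c.choose k) : ℝ) with hC2
        set CN : ℝ := (((c+1).choose (k+1)) : ℝ) with hCN
        have hPascal : CN = C2 + C1 := by
          rw [hCN, hC1, hC2, Nat.choose_succ_succ]
          push_cast
          ring
        have hmul : ((c:ℝ)+1) * C2 = ((k:ℝ)+1) * CN := by
          have := Nat.add_one_mul_choose_eq c k
          have hcast : ((c.succ * c.choose k : ℕ) : ℝ) = (((c+1).choose (k+1) * (k+1) : ℕ) : ℝ) := by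
            exact_mod_cast congrArg (Nat.cast (R := ℝ)) this
          push_cast at hcast
          rw [hC2, hCN]
          linarith
        have hC2q : C2 = q * CN := by
          rw [hq]
          field_simp
          linarith
        have hC1q : C1 = (1 - q) * CN := by
          have : (1 - q) * CN = CN - q * CN := by ring
          rw [this, ← hC2q, hPascal]
          ring
        -- exponent bookkeeping
        set P : ℝ := l*((k:ℝ)+1)*yb + q*x + l^2*V'/4 with hP
        set T : ℝ := l * ((k:ℝ)+1) * ν + l^2 * ((y a - ν)^2 + ∑ i ∈ s', (y i - ν)^2)/4 with hT
        clear hm hmlt hmpos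
        clear_value μ' yb V' b x q ν w P T
        -- massage goal
        simp only [Nat.succ_eq_add_one]
        push_cast
        rw [← hν]
        rw [Finset.sum_insert ha]
        -- identities
        have h5 : ν = yb + w := by
          rw [hw, hν, hyb, hb, hyb]
          field_simp
          ring
        have h3 : y a - ν = (c:ℝ)*w := by
          have e : y a - ν = b - w := by rw [h5, hb]; ring
          rw [e, hbw]; ring
        have h4 : yb - ν = -w := by
          rw [h5]; ring
        have hqx : q*x = l*((k:ℝ)+1)*w := by
          rw [hq, hx, hbw]
          field_simp
        have hzero : ∑ i ∈ s', (y i - yb) = 0 := by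
          rw [Finset.sum_sub_distrib, Finset.sum_const, nsmul_eq_mul, ← hμ', hyb]
          field_simp
          simp [hc]
        have hsum' : ∑ i ∈ s', (y i - ν)^2 = V' + (c:ℝ)*(yb - ν)^2 := by
          have e1 : ∀ i ∈ s', (y i - ν)^2
              = (y i - yb)^2 + 2*(yb - ν)*(y i - yb) + (yb - ν)^2 := fun i _ => by ring
          rw [Finset.sum_congr rfl e1, Finset.sum_add_distrib, Finset.sum_add_distrib,
            ← Finset.mul_sum, hzero, Finset.sum_const, nsmul_eq_mul, ← hV']
          ring
        -- exponent relations
        have hR1 : l * ((k:ℝ)+1) * yb + (l^2 * V')/4 = P - q*x := by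
          rw [hP]; ring
        have hR2 : l * y a + (l * (k:ℝ) * yb + (l^2 * V')/4) = P + (1-q)*x := by
          rw [hP, hx, hb]; ring
        have hPT : P + x^2/8 ≤ T := by
          have key : T - (P + x^2/8) = l^2*w^2*((c:ℝ)^2-1)/8 := by
            rw [hT, hsum', h3, h4, h5, hP, hqx, hx, hbw]
            ring
          have hc1' : (0:ℝ) ≤ (c:ℝ)^2-1 := by
            have h2' : (1:ℝ)*1 ≤ (c:ℝ)*(c:ℝ) :=
              mul_le_mul hcR hcR zero_le_one (by linarith only [hcR])
            rw [sq]
            linarith only [h2']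
          have hpos : (0:ℝ) ≤ l^2*w^2*((c:ℝ)^2-1)/8 := by
            apply div_nonneg _ (by norm_num)
            exact mul_nonneg (mul_nonneg (sq_nonneg l) (sq_nonneg w)) hc1'
          linarith only [key, hpos]
        have hq0 : 0 ≤ q := by
          rw [hq]; exact div_nonneg (by linarith [(Nat.cast_nonneg k : (0:ℝ) ≤ k)]) hNpos.le
        have hq1 : q ≤ 1 := by
          rw [hq, div_le_one hNpos]
          have : (k:ℝ) + 1 ≤ (c:ℝ) + 1 := by
            have : (k:ℝ) ≤ (c:ℝ) := by exact_mod_cast (by omega : k ≤ c)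
            linarith
          linarith
        have hCNpos : (0:ℝ) ≤ CN := by rw [hCN]; positivity
        have h1 := IH (k+1) hks y l
        have h2 := IH k (by omega) y l
        rw [← hμ'] at h1 h2
        rw [← hyb] at h1 h2
        rw [← hV'] at h1 h2
        push_cast at h1 h2
        -- the chain
        calc ∑ A ∈ Finset.powersetCard (k+1) s', Real.exp (l * ∑ i ∈ A, y i) +
              Real.exp (l * y a) * ∑ A ∈ Finset.powersetCard k s', Real.exp (l * ∑ i ∈ A, y i)
            ≤ C1 * Real.exp (l * ((k:ℝ)+1) * yb + (l^2 * V')/4)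
              + Real.exp (l * y a) * (C2 * Real.exp (l * (k:ℝ) * yb + (l^2 * V')/4)) := by
              exact add_le_add h1 (mul_le_mul_of_nonneg_left h2 (Real.exp_pos _).le)
          _ = CN * Real.exp P * (Real.exp (-(q*x)) * (1 - q + q * Real.exp x)) := by
              rw [hR1, hC1q, hC2q]
              have eB : Real.exp (l * y a) * (q * CN * Real.exp (l * (k:ℝ) * yb + (l^2 * V')/4))
                  = q * CN * Real.exp (P + (1-q)*x) := by
                rw [← hR2, Real.exp_add (l * y a) (l * (k:ℝ) * yb + l^2 * V' / 4)]
                ring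
              rw [eB]
              have eC : Real.exp (P + (1-q)*x) = Real.exp P * (Real.exp (-(q*x)) * Real.exp x) := by
                rw [← Real.exp_add, ← Real.exp_add]
                congr 1
                ring
              have eD : Real.exp (P - q*x) = Real.exp P * Real.exp (-(q*x)) := by
                rw [sub_eq_add_neg, Real.exp_add]
              rw [eC, eD]
              ring
          _ ≤ CN * Real.exp P * Real.exp (x^2/8) := by
              apply mul_le_mul_of_nonneg_left (hoeffding_two_point q hq0 hq1 x)
              positivity
          _ = CN * Real.exp (P + x^2/8) := by rw [Real.exp_add]; ring
          _ ≤ CN * Real.exp T := by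
              apply mul_le_mul_of_nonneg_left _ hCNpos
              exact Real.exp_le_exp.2 hPT
          _ = CN * Real.exp (l * ((k:ℝ)+1) * ν
              + l^2 * ((y a - ν)^2 + ∑ i ∈ s', (y i - ν)^2)/4) := by rw [hT]

open scoped Classical
open Finset

/-- Massart concentration inequality for sampling without replacement:
for a finite population `z`, a uniformly random subset `A` of size `nA`
satisfies the stated exponential tail bound for the deviation of the sample
mean above the population mean. -/
theorem massart_sampling_without_replacement
    (n nA : ℕ) (hn : 0 < n) (hnA : 0 < nA) (hle : nA ≤ n)
    (z : Fin n → ℝ) (t : ℝ) (ht : 0 < t) :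
    let zbar : ℝ := (∑ i, z i) / n
    let σ2 : ℝ := (∑ i, (z i - zbar) ^ 2) / n
    let pA : ℝ := (nA : ℝ) / n
    let ς : ℝ := min (1 / 70) (min ((3 * pA) ^ 2 / 70) ((3 - 3 * pA) ^ 2 / 70))
    ((((Finset.univ : Finset (Fin n)).powersetCard nA).filter
        (fun A => (∑ i ∈ A, z i) / nA - zbar ≥ t)).card : ℝ) / (n.choose nA : ℝ)
      ≤ Real.exp (-(pA * nA * t ^ 2) / ((1 + ς) ^ 2 * σ2)) := by
  intro zbar σ2 pA ς
  have hnR : (0:ℝ) < (n:ℝ) := by exact_mod_cast hn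
  have hnAR : (0:ℝ) < (nA:ℝ) := by exact_mod_cast hnA
  have hςnn : 0 ≤ ς := by
    apply le_min (by norm_num)
    apply le_min <;> positivity
  have hς1 : (1:ℝ) ≤ (1 + ς)^2 := by nlinarith [hςnn]
  have hChoosePos : (0:ℝ) < (n.choose nA : ℝ) := by
    exact_mod_cast Nat.choose_pos hle
  set y : Fin n → ℝ := fun i => z i - zbar with hy
  have hsum0 : ∑ i, y i = 0 := by
    simp only [hy, Finset.sum_sub_distrib, Finset.sum_const, Finset.card_univ,
      Fintype.card_fin, nsmul_eq_mul]
    rw [show zbar = (∑ i, z i) / n from rfl]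
    field_simp
    ring
  set V : ℝ := ∑ i, (y i)^2 with hV
  have hVnn : 0 ≤ V := by positivity
  have hσ2 : σ2 = V / n := by
    rw [show σ2 = (∑ i, (z i - zbar) ^ 2) / n from rfl, hV]
  rcases eq_or_lt_of_le hVnn with hV0 | hVpos
  · -- degenerate case: all z i equal zbar, filter is empty
    have hzero : ∀ i, y i = 0 := by
      intro i
      have h := (Finset.sum_eq_zero_iff_of_nonneg
        (fun j _ => sq_nonneg (y j))).1 hV0.symm i (Finset.mem_univ i)
      exact pow_eq_zero_iff (by norm_num) |>.1 h
    have hempty : (((Finset.univ : Finset (Fin n)).powersetCard nA).filter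
        (fun A => (∑ i ∈ A, z i) / nA - zbar ≥ t)) = ∅ := by
      apply Finset.filter_eq_empty_iff.2
      intro A hA
      obtain ⟨-, hcard⟩ := Finset.mem_powersetCard.1 hA
      have hzA : ∀ i ∈ A, z i = zbar := by
        intro i _
        have := hzero i
        simp only [hy] at this
        linarith
      rw [Finset.sum_congr rfl hzA, Finset.sum_const, hcard, nsmul_eq_mul,
        mul_div_cancel_left₀ zbar hnAR.ne']
      simp only [sub_self, ge_iff_le, not_le]
      exact ht
    rw [hempty]
    simp only [Finset.card_empty, Nat.cast_zero, zero_div]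
    positivity
  · -- main case
    set l : ℝ := 2*(nA:ℝ)*t/V with hl
    have hlnn : 0 ≤ l := by
      rw [hl]; positivity
    -- Markov step
    have markov : ((((Finset.univ : Finset (Fin n)).powersetCard nA).filter
          (fun A => (∑ i ∈ A, z i) / nA - zbar ≥ t)).card : ℝ) * Real.exp (l * ((nA:ℝ)*t))
        ≤ ∑ A ∈ (Finset.univ : Finset (Fin n)).powersetCard nA, Real.exp (l * ∑ i ∈ A, y i) := by
      set F := (((Finset.univ : Finset (Fin n)).powersetCard nA).filter
          (fun A => (∑ i ∈ A, z i) / nA - zbar ≥ t)) with hF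
      have step1 : (F.card : ℝ) * Real.exp (l * ((nA:ℝ)*t))
          = ∑ _A ∈ F, Real.exp (l * ((nA:ℝ)*t)) := by
        rw [Finset.sum_const, nsmul_eq_mul]
      rw [step1]
      apply le_trans (Finset.sum_le_sum ?_) (Finset.sum_le_sum_of_subset_of_nonneg
        (Finset.filter_subset _ _) (fun A _ _ => (Real.exp_pos _).le))
      intro A hA
      obtain ⟨hmem, hcond⟩ := Finset.mem_filter.1 hA
      obtain ⟨-, hcard⟩ := Finset.mem_powersetCard.1 hmem
      apply Real.exp_le_exp.2
      apply mul_le_mul_of_nonneg_left _ hlnn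
      have hyA : ∑ i ∈ A, y i = (∑ i ∈ A, z i) - (nA:ℝ) * zbar := by
        simp only [hy, Finset.sum_sub_distrib, Finset.sum_const, hcard, nsmul_eq_mul]
      have hge : t + zbar ≤ (∑ i ∈ A, z i) / (nA:ℝ) := by linarith [hcond]
      have := (le_div_iff₀ hnAR).1 hge
      rw [hyA]
      nlinarith [this]
    -- MGF bound
    have mgf : ∑ A ∈ (Finset.univ : Finset (Fin n)).powersetCard nA,
          Real.exp (l * ∑ i ∈ A, y i)
        ≤ (n.choose nA : ℝ) * Real.exp (l^2 * V / 4) := by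
      have h := mgf_powersetCard (Finset.univ : Finset (Fin n)) nA
        (by rw [Finset.card_univ, Fintype.card_fin]; exact hle) y l
      rw [Finset.card_univ, Fintype.card_fin, hsum0] at h
      simp only [zero_div, mul_zero, sub_zero, zero_add] at h
      rw [← hV] at h
      exact h
    have key : ((((Finset.univ : Finset (Fin n)).powersetCard nA).filter
          (fun A => (∑ i ∈ A, z i) / nA - zbar ≥ t)).card : ℝ)
        ≤ (n.choose nA : ℝ) * Real.exp (-((nA:ℝ)^2 * t^2 / V)) := by
      have h1 := le_trans markov mgf
      have h2 : Real.exp (l^2 * V / 4) = Real.exp (l * ((nA:ℝ)*t)) * Real.exp (-((nA:ℝ)^2 * t^2 / V)) := by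
        rw [← Real.exp_add]
        congr 1
        rw [hl]
        field_simp
        ring
      rw [h2] at h1
      have h3 : (n.choose nA : ℝ) * (Real.exp (l * ((nA:ℝ)*t)) * Real.exp (-((nA:ℝ)^2 * t^2 / V)))
          = ((n.choose nA : ℝ) * Real.exp (-((nA:ℝ)^2 * t^2 / V))) * Real.exp (l * ((nA:ℝ)*t)) := by
        ring
      rw [h3] at h1
      exact le_of_mul_le_mul_right h1 (Real.exp_pos _)
    -- conclude
    rw [div_le_iff₀ hChoosePos]
    apply le_trans key
    rw [mul_comm]
    apply mul_le_mul_of_nonneg_right _ hChoosePos.le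
    apply Real.exp_le_exp.2
    rw [hσ2]
    have h1ς : (0:ℝ) < (1+ς)^2 := by positivity
    have heq : (pA * (nA:ℝ) * t^2) / ((1+ς)^2 * (V/n)) = ((nA:ℝ)^2*t^2/V) / (1+ς)^2 := by
      rw [show pA = (nA:ℝ)/n from rfl]
      field_simp
    have hle2 : ((nA:ℝ)^2*t^2/V) / (1+ς)^2 ≤ (nA:ℝ)^2*t^2/V :=
      div_le_self (by positivity) hς1
    rw [neg_div, heq]
    linarith [hle2]
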